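/- Let x_1,...,x_n be distinct elements of a field F, n ≥ 2, and let a ∈ F. Then ∑_{i=1}^n ∏_{j ≠ i} (1 - a x_i x_j)/(x_i - x_j) equals a^{(n-1)/2} if n is odd, and 0 if n is even. -/

import Mathlib

open Finset Polynomial
section
variable {F : Type*} [Field F] [DecidableEq F]
noncomputable def geo (y : F) : PowerSeries F := PowerSeries.mk fun k => y ^ k
noncomputable def pp (s : Finset F) : Polynomial F :=
  ∏ v ∈ s, (1 - Polynomial.C v * Polynomial.X)
noncomputable def cc (d : ℕ) (s : Finset F) : F := (pp s).coeff d
noncomputable def hh (m : ℕ) (s : Finset F) : F :=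
  PowerSeries.coeff m (∏ v ∈ s, geo v)

lemma one_sub_mul_geo (y : F) :
    (1 - PowerSeries.C y * PowerSeries.X) * geo y = 1 := by
  ext k
  rw [sub_mul, one_mul, mul_assoc, map_sub, PowerSeries.coeff_C_mul]
  cases k with
  | zero => simp [geo, PowerSeries.coeff_zero_eq_constantCoeff]
  | succ k => simp [geo, PowerSeries.coeff_succ_X_mul, pow_succ, mul_comm]

lemma coe_one_sub (y : F) :
    ((1 - Polynomial.C y * Polynomial.X : Polynomial F) : PowerSeries F)
      = 1 - PowerSeries.C y * PowerSeries.X := by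
  push_cast
  rfl

lemma pp_mul_geo_prod (s : Finset F) :
    (pp s : PowerSeries F) * ∏ v ∈ s, geo v = 1 := by
  rw [pp, ← Polynomial.coeToPowerSeries.ringHom_apply, map_prod, ← Finset.prod_mul_distrib]
  refine Finset.prod_eq_one fun v _ => ?_
  rw [Polynomial.coeToPowerSeries.ringHom_apply, coe_one_sub, one_sub_mul_geo]

lemma E_identity (s : Finset F) (r : ℕ) :
    ∑ i ∈ range (r + 1), cc (r - i) s * hh i s = if r = 0 then 1 else 0 := by
  have h := congrArg (PowerSeries.coeff r) (pp_mul_geo_prod s)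
  rw [PowerSeries.coeff_mul, Finset.Nat.sum_antidiagonal_eq_sum_range_succ_mk] at h
  rw [← Finset.sum_range_reflect] at h
  simp only [Polynomial.coeff_coe] at h
  rw [PowerSeries.coeff_one] at h
  rw [← h]
  apply Finset.sum_congr rfl
  intro i hi
  rw [Finset.mem_range] at hi
  have h1 : r + 1 - 1 - i = r - i := by omega
  have h2 : r - (r - i) = i := by omega
  rw [h1, h2, cc, hh]

lemma pp_erase {s : Finset F} {w : F} (hw : w ∈ s) :
    (pp (s.erase w) : PowerSeries F) = (pp s : PowerSeries F) * geo w := by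
  have h : pp s = (1 - Polynomial.C w * Polynomial.X) * pp (s.erase w) := by
    rw [pp, pp, ← Finset.mul_prod_erase _ _ hw]
  rw [h, Polynomial.coe_mul, coe_one_sub, mul_right_comm, one_sub_mul_geo, one_mul]

lemma cc_erase {s : Finset F} {w : F} (hw : w ∈ s) (d : ℕ) :
    cc d (s.erase w) = ∑ j ∈ range (d + 1), cc (d - j) s * w ^ j := by
  have h := congrArg (PowerSeries.coeff d) (pp_erase hw)
  rw [PowerSeries.coeff_mul, Finset.Nat.sum_antidiagonal_eq_sum_range_succ_mk,
    ← Finset.sum_range_reflect] at h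
  simp only [Polynomial.coeff_coe] at h
  simp only [cc]
  rw [h]
  refine Finset.sum_congr rfl fun i hi => ?_
  rw [Finset.mem_range] at hi
  have h1 : d.succ - 1 - i = d - i := by omega
  rw [h1]
  have h2 : d - (d - i) = i := by omega
  rw [h2]
  simp [geo]

omit [DecidableEq F] in
lemma hh_zero (s : Finset F) : hh 0 s = 1 := by
  simp [hh, PowerSeries.coeff_zero_eq_constantCoeff, map_prod, geo]

omit [DecidableEq F] in
lemma natDegree_pp_le (s : Finset F) : (pp s).natDegree ≤ s.card := by
  refine le_trans (Polynomial.natDegree_prod_le _ _) ?_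
  rw [Finset.card_eq_sum_ones]
  apply Finset.sum_le_sum
  intro v _
  refine le_trans (Polynomial.natDegree_sub_le _ _) ?_
  have := Polynomial.natDegree_C_mul_le v (Polynomial.X : Polynomial F)
  simp only [Polynomial.natDegree_one, Polynomial.natDegree_X] at *
  omega

omit [DecidableEq F] in
lemma eval_pp (s : Finset F) (t : F) :
    ∏ v ∈ s, (1 - t * v) = ∑ d ∈ range (s.card + 1), cc d s * t ^ d := by
  have h : (pp s).eval t = ∏ v ∈ s, (1 - t * v) := by
    rw [pp, Polynomial.eval_prod]
    refine Finset.prod_congr rfl fun v _ => ?_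
    simp
    ring
  rw [← h, Polynomial.eval_eq_sum_range'
    (lt_of_le_of_lt (natDegree_pp_le s) (Nat.lt_succ_self _))]
  rfl

omit [DecidableEq F] in
lemma geo_sub_geo (z y : F) :
    (geo z : PowerSeries F) - geo y
      = PowerSeries.C (z - y) * (PowerSeries.X * (geo z * geo y)) := by
  ext k
  rw [map_sub, PowerSeries.coeff_C_mul]
  cases k with
  | zero => simp [geo, PowerSeries.coeff_zero_eq_constantCoeff]
  | succ k =>
    rw [PowerSeries.coeff_succ_X_mul, PowerSeries.coeff_mul,
      Finset.Nat.sum_antidiagonal_eq_sum_range_succ_mk]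
    simp only [geo, PowerSeries.coeff_mk]
    rw [mul_comm, ← geom_sum₂_mul z y (k + 1)]
    congr 1

lemma hh_sub {u : Finset F} {y z : F} (hy : y ∉ u) (hz : z ∉ u) (hyz : y ≠ z) (m : ℕ) :
    hh (m + 1) (insert z u) - hh (m + 1) (insert y u)
      = (z - y) * hh m (insert y (insert z u)) := by
  simp only [hh]
  rw [Finset.prod_insert hz, Finset.prod_insert hy, ← map_sub, ← sub_mul, geo_sub_geo,
    Finset.prod_insert (by simp [hyz, hy] : y ∉ insert z u), Finset.prod_insert hz,
    mul_assoc, mul_assoc, PowerSeries.coeff_C_mul, PowerSeries.coeff_succ_X_mul]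
  congr 2
  ring

noncomputable def DD (p : ℕ) (s : Finset F) : F :=
  ∑ w ∈ s, w ^ p / ∏ v ∈ s.erase w, (w - v)

lemma prod_sub_ne_zero {u : Finset F} {w : F} (hw : w ∉ u) :
    ∏ v ∈ u, (w - v) ≠ 0 := by
  rw [Finset.prod_ne_zero_iff]
  intro v hv
  exact sub_ne_zero.mpr (fun h => hw (h ▸ hv))

lemma DD_expand {u : Finset F} {z : F} (hz : z ∉ u) (p : ℕ) :
    DD p (insert z u) = z ^ p / ∏ v ∈ u, (z - v)
      + ∑ w ∈ u, w ^ p / ((w - z) * ∏ v ∈ u.erase w, (w - v)) := by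
  simp only [DD]
  rw [Finset.sum_insert hz, Finset.erase_insert hz]
  congr 1
  refine Finset.sum_congr rfl fun w hw => ?_
  rw [Finset.erase_insert_of_ne (ne_of_mem_of_not_mem hw hz).symm, Finset.prod_insert
    (fun h => hz (Finset.mem_of_mem_erase h))]

lemma DD_rec' {u : Finset F} {y z : F} (hy : y ∉ u) (hz : z ∉ u) (hyz : y ≠ z) (p : ℕ) :
    DD p (insert y (insert z u)) * (z - y) = DD p (insert z u) - DD p (insert y u) := by
  have hy' : y ∉ insert z u := by simp [hyz, hy]
  have e0 : ∑ w ∈ insert z u, w ^ p / ((w - y) * ∏ v ∈ (insert z u).erase w, (w - v))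
      = z ^ p / ((z - y) * ∏ v ∈ u, (z - v))
        + ∑ w ∈ u, w ^ p / ((w - y) * ((w - z) * ∏ v ∈ u.erase w, (w - v))) := by
    rw [Finset.sum_insert hz, Finset.erase_insert hz]
    congr 1
    refine Finset.sum_congr rfl fun w hw => ?_
    rw [Finset.erase_insert_of_ne (ne_of_mem_of_not_mem hw hz).symm, Finset.prod_insert
      (fun h => hz (Finset.mem_of_mem_erase h))]
  rw [DD_expand hy', e0, DD_expand hz, DD_expand hy, Finset.prod_insert hz]
  rw [add_mul, add_mul, Finset.sum_mul]
  have hRy : (∏ v ∈ u, (y - v)) ≠ 0 := prod_sub_ne_zero hy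
  have hRz : (∏ v ∈ u, (z - v)) ≠ 0 := prod_sub_ne_zero hz
  have hyz' : y - z ≠ 0 := sub_ne_zero.mpr hyz
  have hzy' : z - y ≠ 0 := sub_ne_zero.mpr (Ne.symm hyz)
  have e1 : y ^ p / ((y - z) * ∏ v ∈ u, (y - v)) * (z - y)
      = -(y ^ p / ∏ v ∈ u, (y - v)) := by
    field_simp
    ring
  have e2 : z ^ p / ((z - y) * ∏ v ∈ u, (z - v)) * (z - y)
      = z ^ p / ∏ v ∈ u, (z - v) := by
    field_simp
  have e3 : ∀ w ∈ u, w ^ p / ((w - y) * ((w - z) * ∏ v ∈ u.erase w, (w - v))) * (z - y)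
      = w ^ p / ((w - z) * ∏ v ∈ u.erase w, (w - v))
        - w ^ p / ((w - y) * ∏ v ∈ u.erase w, (w - v)) := by
    intro w hw
    have hQ : (∏ v ∈ u.erase w, (w - v)) ≠ 0 :=
      prod_sub_ne_zero (Finset.notMem_erase _ _)
    have hwy : w - y ≠ 0 := sub_ne_zero.mpr (ne_of_mem_of_not_mem hw hy)
    have hwz : w - z ≠ 0 := sub_ne_zero.mpr (ne_of_mem_of_not_mem hw hz)
    field_simp
    ring
  rw [Finset.sum_congr rfl e3, e1, e2, Finset.sum_sub_distrib]
  ring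

lemma DD_rec {s : Finset F} {y z : F} (hy : y ∈ s) (hz : z ∈ s) (hyz : y ≠ z) (p : ℕ) :
    DD p s * (z - y) = DD p (s.erase y) - DD p (s.erase z) := by
  have hzy : z ∈ s.erase y := Finset.mem_erase.mpr ⟨Ne.symm hyz, hz⟩
  have hyz2 : y ∈ s.erase z := Finset.mem_erase.mpr ⟨hyz, hy⟩
  have h1 : s.erase y = insert z ((s.erase y).erase z) := (Finset.insert_erase hzy).symm
  have h2 : s.erase z = insert y ((s.erase y).erase z) := by
    rw [Finset.erase_right_comm]
    exact (Finset.insert_erase hyz2).symm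
  have h3 : s = insert y (insert z ((s.erase y).erase z)) := by
    rw [← h1]
    exact (Finset.insert_erase hy).symm
  have hyu : y ∉ (s.erase y).erase z := fun h => Finset.notMem_erase y s (Finset.mem_of_mem_erase h)
  have hzu : z ∉ (s.erase y).erase z := Finset.notMem_erase _ _
  rw [h1, h2]
  conv_lhs => rw [h3]
  exact DD_rec' hyu hzu hyz p

lemma hh_erase_sub {s : Finset F} {y z : F} (hy : y ∈ s) (hz : z ∈ s) (hyz : y ≠ z) (m : ℕ) :
    hh (m + 1) (s.erase y) - hh (m + 1) (s.erase z) = (z - y) * hh m s := by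
  have hzy : z ∈ s.erase y := Finset.mem_erase.mpr ⟨Ne.symm hyz, hz⟩
  have hyz2 : y ∈ s.erase z := Finset.mem_erase.mpr ⟨hyz, hy⟩
  have h1 : s.erase y = insert z ((s.erase y).erase z) := (Finset.insert_erase hzy).symm
  have h2 : s.erase z = insert y ((s.erase y).erase z) := by
    rw [Finset.erase_right_comm]
    exact (Finset.insert_erase hyz2).symm
  have h3 : s = insert y (insert z ((s.erase y).erase z)) := by
    rw [← h1]
    exact (Finset.insert_erase hy).symm
  have hyu : y ∉ (s.erase y).erase z := fun h =>
    Finset.notMem_erase y s (Finset.mem_of_mem_erase h)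
  have hzu : z ∉ (s.erase y).erase z := Finset.notMem_erase _ _
  rw [h1, h2]
  conv_rhs => rw [h3]
  exact hh_sub hyu hzu hyz m

lemma DD_eq : ∀ (s : Finset F), s.Nonempty → ∀ p : ℕ,
    DD p s = if p + 1 < s.card then 0 else hh (p + 1 - s.card) s := by
  intro s
  induction s using Finset.strongInduction with
  | _ s ih =>
    intro hne p
    rcases Nat.lt_or_ge s.card 2 with hc | hc
    · -- card = 1
      have hc1 : s.card = 1 := le_antisymm (by omega) (Finset.card_pos.mpr hne)
      obtain ⟨y, rfl⟩ := Finset.card_eq_one.mp hc1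
      rw [hc1]
      simp only [show ¬ (p + 1 < 1) by omega, if_false]
      simp only [DD, Finset.sum_singleton, Finset.erase_singleton, Finset.prod_empty, div_one]
      simp [hh, geo]
    · obtain ⟨y, hy, z, hz, hyz⟩ := Finset.one_lt_card.mp hc
      have hcy : (s.erase y).card = s.card - 1 := Finset.card_erase_of_mem hy
      have hcz : (s.erase z).card = s.card - 1 := Finset.card_erase_of_mem hz
      have hney : (s.erase y).Nonempty := ⟨z, Finset.mem_erase.mpr ⟨Ne.symm hyz, hz⟩⟩
      have hnez : (s.erase z).Nonempty := ⟨y, Finset.mem_erase.mpr ⟨hyz, hy⟩⟩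
      have hrec := DD_rec hy hz hyz p
      rw [ih _ (Finset.erase_ssubset hy) hney p, ih _ (Finset.erase_ssubset hz) hnez p,
        hcy, hcz] at hrec
      have hzy' : z - y ≠ 0 := sub_ne_zero.mpr (Ne.symm hyz)
      rcases Nat.lt_or_ge (p + 2) s.card with h | h
      · rw [if_pos (show p + 1 < s.card - 1 by omega),
          if_pos (show p + 1 < s.card - 1 by omega), sub_self] at hrec
        rw [if_pos (show p + 1 < s.card by omega)]
        exact mul_right_cancel₀ hzy' (by rw [hrec]; ring)
      · rcases Nat.eq_or_lt_of_le h with heq | hgt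
        · rw [if_neg (show ¬ p + 1 < s.card - 1 by omega),
            if_neg (show ¬ p + 1 < s.card - 1 by omega),
            show p + 1 - (s.card - 1) = 0 by omega, hh_zero, hh_zero, sub_self] at hrec
          rw [if_pos (show p + 1 < s.card by omega)]
          exact mul_right_cancel₀ hzy' (by rw [hrec]; ring)
        · rw [if_neg (show ¬ p + 1 < s.card - 1 by omega),
            if_neg (show ¬ p + 1 < s.card - 1 by omega),
            show p + 1 - (s.card - 1) = (p + 1 - s.card) + 1 by omega,
            hh_erase_sub hy hz hyz] at hrec
          rw [if_neg (show ¬ p + 1 < s.card by omega)]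
          exact mul_right_cancel₀ hzy' (by rw [hrec]; ring)

lemma cc_hh_sum (s : Finset F) (n d : ℕ) (hn : 1 ≤ n) (hd : d < n) :
    ∑ j ∈ range (d + 1), cc (d - j) s * (if d + j + 1 < n then 0 else hh (d + j + 1 - n) s)
      = if n = 2 * d + 1 then 1 else 0 := by
  rcases Nat.lt_or_ge (2 * d + 1) n with h | h
  · rw [if_neg (by omega)]
    refine Finset.sum_eq_zero fun j hj => ?_
    rw [Finset.mem_range] at hj
    rw [if_pos (by omega), mul_zero]
  · have hr : n - 1 - d ≤ d + 1 := by omega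
    rw [Finset.range_eq_Ico, ← Finset.sum_Ico_consecutive _ (Nat.zero_le (n - 1 - d)) hr]
    have hz : ∑ j ∈ Finset.Ico 0 (n - 1 - d),
        cc (d - j) s * (if d + j + 1 < n then 0 else hh (d + j + 1 - n) s) = 0 := by
      refine Finset.sum_eq_zero fun j hj => ?_
      rw [Finset.mem_Ico] at hj
      rw [if_pos (by omega), mul_zero]
    rw [hz, zero_add, Finset.sum_Ico_eq_sum_range]
    have hlen : d + 1 - (n - 1 - d) = (2 * d + 1 - n) + 1 := by omega
    rw [hlen]
    have hterm : ∀ i ∈ range ((2 * d + 1 - n) + 1),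
        cc (d - (n - 1 - d + i)) s
          * (if d + (n - 1 - d + i) + 1 < n then 0 else hh (d + (n - 1 - d + i) + 1 - n) s)
        = cc ((2 * d + 1 - n) - i) s * hh i s := by
      intro i hi
      rw [Finset.mem_range] at hi
      rw [if_neg (by omega), show d - (n - 1 - d + i) = (2 * d + 1 - n) - i by omega,
        show d + (n - 1 - d + i) + 1 - n = i by omega]
    rw [Finset.sum_congr rfl hterm, E_identity]
    by_cases h0 : 2 * d + 1 - n = 0
    · rw [if_pos h0, if_pos (by omega)]
    · rw [if_neg h0, if_neg (by omega)]
end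

open Finset

/-- A generalization of an IMO 2019 shortlist problem. -/
theorem shortlist_sum {F : Type*} [Field F] (n : ℕ) (hn : 2 ≤ n)
    (x : Fin n → F) (hx : Function.Injective x) (a : F) :
    ∑ i, ∏ j ∈ Finset.univ.erase i, ((1 - a * x i * x j) / (x i - x j))
      = if Odd n then a ^ ((n - 1) / 2) else 0 := by
  classical
  set s : Finset F := Finset.univ.image x with hs
  have hcard : s.card = n := by
    rw [hs, Finset.card_image_of_injective _ hx, Finset.card_univ, Fintype.card_fin]
  have hne : s.Nonempty := Finset.card_pos.mp (by omega)
  have hstep1 : ∑ i, ∏ j ∈ Finset.univ.erase i, ((1 - a * x i * x j) / (x i - x j))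
      = ∑ w ∈ s, (∑ d ∈ range n, cc d (s.erase w) * (a * w) ^ d)
          / ∏ v ∈ s.erase w, (w - v) := by
    rw [hs, Finset.sum_image (fun i _ j _ h => hx h)]
    refine Finset.sum_congr rfl fun i _ => ?_
    have hmem : x i ∈ s := Finset.mem_image_of_mem x (Finset.mem_univ i)
    have himg : ((Finset.univ.erase i).image x) = s.erase (x i) := Finset.image_erase hx _ i
    have hinj : ∀ b ∈ Finset.univ.erase i, ∀ c ∈ Finset.univ.erase i, x b = x c → b = c :=
      fun b _ c _ h => hx h
    have hc2 : (s.erase (x i)).card + 1 = n := by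
      rw [Finset.card_erase_of_mem hmem, hcard]
      omega
    rw [Finset.prod_div_distrib]
    congr 1
    · calc ∏ j ∈ Finset.univ.erase i, (1 - a * x i * x j)
          = ∏ v ∈ s.erase (x i), (1 - (a * x i) * v) := by
            rw [← himg, Finset.prod_image hinj]
        _ = ∑ d ∈ range ((s.erase (x i)).card + 1), cc d (s.erase (x i)) * (a * x i) ^ d :=
            eval_pp _ _
        _ = ∑ d ∈ range n, cc d (s.erase (x i)) * (a * x i) ^ d := by rw [hc2]
    · rw [← himg, Finset.prod_image hinj]
  rw [hstep1]
  have hstep2 : ∑ w ∈ s, (∑ d ∈ range n, cc d (s.erase w) * (a * w) ^ d)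
          / ∏ v ∈ s.erase w, (w - v)
      = ∑ d ∈ range n, a ^ d * ∑ j ∈ range (d + 1), cc (d - j) s * DD (d + j) s := by
    have e1 : ∀ w ∈ s, (∑ d ∈ range n, cc d (s.erase w) * (a * w) ^ d)
          / ∏ v ∈ s.erase w, (w - v)
        = ∑ d ∈ range n, ∑ j ∈ range (d + 1),
            a ^ d * (cc (d - j) s * (w ^ (d + j) / ∏ v ∈ s.erase w, (w - v))) := by
      intro w hw
      rw [Finset.sum_div]
      refine Finset.sum_congr rfl fun d _ => ?_
      rw [cc_erase hw d, Finset.sum_mul, Finset.sum_div]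
      refine Finset.sum_congr rfl fun j _ => ?_
      rw [mul_pow, pow_add]
      ring
    rw [Finset.sum_congr rfl e1, Finset.sum_comm]
    refine Finset.sum_congr rfl fun d _ => ?_
    rw [Finset.mul_sum]
    rw [Finset.sum_comm]
    refine Finset.sum_congr rfl fun j _ => ?_
    simp only [DD]
    rw [Finset.mul_sum, Finset.mul_sum]
  rw [hstep2]
  have hstep3 : ∀ d ∈ range n, a ^ d * ∑ j ∈ range (d + 1), cc (d - j) s * DD (d + j) s
      = a ^ d * (if n = 2 * d + 1 then 1 else 0) := by
    intro d hd
    rw [Finset.mem_range] at hd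
    congr 1
    have e2 : ∀ j ∈ range (d + 1), cc (d - j) s * DD (d + j) s
        = cc (d - j) s * (if d + j + 1 < n then 0 else hh (d + j + 1 - n) s) := by
      intro j _
      rw [DD_eq s hne (d + j), hcard]
    rw [Finset.sum_congr rfl e2, cc_hh_sum s n d (by omega) hd]
  rw [Finset.sum_congr rfl hstep3]
  by_cases hodd : Odd n
  · obtain ⟨k, hk⟩ := hodd
    rw [if_pos ⟨k, hk⟩]
    have e3 : ∀ d ∈ range n, a ^ d * (if n = 2 * d + 1 then 1 else 0)
        = if d = k then a ^ k else 0 := by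
      intro d _
      by_cases hdk : d = k
      · subst hdk
        rw [if_pos (by omega), if_pos rfl, mul_one]
      · rw [if_neg (by omega), if_neg hdk, mul_zero]
    rw [Finset.sum_congr rfl e3, Finset.sum_ite_eq' (range n) k (fun _ => a ^ k),
      if_pos (Finset.mem_range.mpr (by omega)), show (n - 1) / 2 = k by omega]
  · rw [if_neg hodd]
    refine Finset.sum_eq_zero fun d _ => ?_
    rw [if_neg (fun h => hodd ⟨d, by omega⟩), mul_zero]
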